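/- (Ruppert's encroachment lemma) If the circumcenter ċ of a circle c of radius r_c lies strictly inside the diametral circle d of a segment pq (where d has center the midpoint of pq and radius r_d = |pq|/2), and neither endpoint p nor q lies strictly inside c, then r_d ≥ r_c/√2. -/
import Mathlib

open Metric

/-- Ruppert's encroachment lemma: if the circumcenter `c` of a circle of radius `r_c`
lies strictly inside the diametral circle of segment `pq` (center the midpoint of `pq`,
radius `r_d = dist p q / 2`), and neither `p` nor `q` lies strictly inside the circle
(`dist c p ≥ r_c`, `dist c q ≥ r_c`), then `r_d ≥ r_c / √2`. -/
theorem encroaching_circumcircle_radius_bound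
    (p q c : EuclideanSpace ℝ (Fin 2)) (rc : ℝ) (hrc : 0 < rc)
    (hencroach : dist c (midpoint ℝ p q) < dist p q / 2)
    (hp : rc ≤ dist c p) (hq : rc ≤ dist c q) :
    rc / Real.sqrt 2 ≤ dist p q / 2 := by
  have hmed : dist c p ^ 2 + dist c q ^ 2
      = 2 * dist c (midpoint ℝ p q) ^ 2 + dist p q ^ 2 / 2 := by
    have h := parallelogram_law_with_norm ℝ (c - p) (c - q)
    simp only [dist_eq_norm, midpoint_eq_smul_add, invOf_eq_inv]
    have e1 : c - p + (c - q) = (2:ℝ) • (c - (2:ℝ)⁻¹ • (p + q)) := by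
      module
    have e2 : c - p - (c - q) = q - p := by abel
    rw [e1, e2] at h
    rw [norm_sub_rev p q]
    have : ‖(2:ℝ) • (c - (2:ℝ)⁻¹ • (p + q))‖ = 2 * ‖c - (2:ℝ)⁻¹ • (p + q)‖ := by
      rw [norm_smul]; simp
    rw [this] at h
    nlinarith [h]
  have hd : 0 ≤ dist p q / 2 := by positivity
  have hcm : 0 ≤ dist c (midpoint ℝ p q) := dist_nonneg
  have key : rc ^ 2 ≤ 2 * (dist p q / 2) ^ 2 := by nlinarith
  have h2 : Real.sqrt 2 > 0 := by positivity
  rw [div_le_iff₀ h2]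
  have hs : 0 ≤ rc + dist p q / 2 * Real.sqrt 2 := by positivity
  nlinarith [Real.sq_sqrt (by norm_num : (0:ℝ) ≤ 2), Real.sqrt_nonneg 2]
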